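/- Let Y be standard Gaussian in R^p, p ≥ 1, and λ_1, ..., λ_p > 0. Then for each i, E[λ_i² Y_i⁴ / (Σ_k λ_k Y_k²)²] = (3 λ_i² / 4) ∫_0^∞ x dx / ( (1 + λ_i x)² ∏_{k=1}^p (1 + λ_k x)^{1/2} ). -/

import Mathlib

open MeasureTheory ProbabilityTheory Real
open Set
open scoped ENNReal NNReal

theorem lintegral_fin_pi_prod : ∀ {n : ℕ} (μ : Fin n → Measure ℝ) [∀ i, SigmaFinite (μ i)]
    (f : Fin n → ℝ → ℝ≥0∞), (∀ i, Measurable (f i)) →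
    ∫⁻ ω, ∏ i, f i (ω i) ∂(Measure.pi μ) = ∏ i, ∫⁻ x, f i x ∂(μ i) := by
  intro n
  induction n with
  | zero => intro μ _ f hf; simp
  | succ n ih =>
    intro μ _ f hf
    have h := (measurePreserving_piFinSuccAbove μ 0).symm
    rw [← h.lintegral_comp_emb
      (MeasurableEquiv.piFinSuccAbove (fun _ => ℝ) 0).symm.measurableEmbedding]
    simp_rw [MeasurableEquiv.piFinSuccAbove_symm_apply, Fin.insertNthEquiv,
      Equiv.coe_fn_mk, Fin.insertNth_zero, Fin.prod_univ_succ, Fin.cons_zero, Fin.cons_succ,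
      Fin.zero_succAbove, cast_eq]
    have hm : Measurable fun (y : Fin n → ℝ) => ∏ j : Fin n, f j.succ (y j) :=
      Finset.measurable_prod _ fun j _ => (hf j.succ).comp (measurable_pi_apply j)
    rw [lintegral_prod_mul (hf 0).aemeasurable hm.aemeasurable]
    rw [ih _ (fun j => f j.succ) (fun j => hf j.succ)]

theorem integrableOn_id_mul_exp {r : ℝ} (hr : 0 < r) :
    IntegrableOn (fun x : ℝ => x * rexp (-(r * x))) (Ioi 0) := by
  have := integrableOn_rpow_mul_exp_neg_mul_rpow (s := 1) (p := 1) (b := r)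
    (by norm_num) (by norm_num) hr
  simpa [Real.rpow_one, neg_mul] using this

theorem integral_id_mul_exp {r : ℝ} (hr : 0 < r) :
    ∫ x in Ioi (0:ℝ), x * rexp (-(r * x)) = 1 / r ^ 2 := by
  have h := integral_rpow_mul_exp_neg_mul_Ioi (a := 2) (r := r) (by norm_num) hr
  rw [show ((2:ℝ) - 1) = 1 by norm_num] at h
  simp only [Real.rpow_one] at h
  rw [h, Real.Gamma_two, mul_one]
  rw [show ((1:ℝ)/r) ^ (2:ℝ) = (1/r) ^ (2:ℕ) from Real.rpow_natCast _ 2]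
  rw [div_pow, one_pow]

theorem lintegral_kernel {r : ℝ} (hr : 0 < r) :
    ∫⁻ x in Ioi (0:ℝ), ENNReal.ofReal (x * rexp (-(r * x))) = ENNReal.ofReal (1 / r ^ 2) := by
  rw [← ofReal_integral_eq_lintegral_ofReal (integrableOn_id_mul_exp hr)
    (((ae_restrict_iff' measurableSet_Ioi).2 (ae_of_all _ fun x hx => mul_nonneg (le_of_lt hx) (Real.exp_pos _).le)))]
  rw [integral_id_mul_exp hr]

theorem integral_pow4_gaussian {b : ℝ} (hb : 0 < b) :
    ∫ y : ℝ, y ^ 4 * rexp (-b * y ^ 2) = 3 / 4 * Real.sqrt π * (1 / b) ^ ((5:ℝ)/2) := by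
  have h1 : ∫ y : ℝ, y ^ 4 * rexp (-b * y ^ 2)
      = 2 * ∫ y in Ioi (0:ℝ), y ^ 4 * rexp (-b * y ^ 2) := by
    rw [← integral_comp_abs (f := fun y => y ^ 4 * rexp (-b * y ^ 2))]
    congr 1
    ext y
    rw [show |y| ^ 4 = y ^ 4 by rw [← abs_pow]; exact abs_of_nonneg (by positivity), sq_abs]
  have h2 : ∫ y in Ioi (0:ℝ), y ^ 4 * rexp (-b * y ^ 2)
      = (1/2) * ((1 / b) ^ ((5:ℝ)/2) * Real.Gamma (5/2)) := by
    have key := integral_comp_rpow_Ioi_of_pos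
      (g := fun y => (1/2) * (y ^ ((3:ℝ)/2) * rexp (-(b * y)))) (p := 2) two_pos
    have hval : ∫ y in Ioi (0:ℝ), (1/2) * (y ^ ((3:ℝ)/2) * rexp (-(b * y)))
        = (1/2) * ((1 / b) ^ ((5:ℝ)/2) * Real.Gamma (5/2)) := by
      rw [integral_const_mul]
      congr 1
      have := integral_rpow_mul_exp_neg_mul_Ioi (a := 5/2) (r := b) (by norm_num) hb
      rw [show ((5:ℝ)/2 - 1) = 3/2 by norm_num] at this
      rw [this]
    rw [← hval, ← key]
    refine setIntegral_congr_fun measurableSet_Ioi fun x hx => ?_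
    have hx0 : (0:ℝ) < x := hx
    have hx2 : x ^ (2:ℝ) = x ^ (2:ℕ) := Real.rpow_natCast _ 2
    have h32 : (x ^ (2:ℝ)) ^ ((3:ℝ)/2) = x ^ (3:ℕ) := by
      rw [← Real.rpow_natCast x 3, ← Real.rpow_mul hx0.le]
      norm_num
    simp only [smul_eq_mul]
    rw [h32, hx2]
    rw [show ((2:ℝ) - 1) = 1 by norm_num, Real.rpow_one]
    ring_nf
  rw [h1, h2]
  have hg : Real.Gamma (5/2) = 3/4 * Real.sqrt π := by
    rw [show ((5:ℝ)/2) = 3/2 + 1 by norm_num, Real.Gamma_add_one (by norm_num)]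
    rw [show ((3:ℝ)/2) = 1/2 + 1 by norm_num, Real.Gamma_add_one (by norm_num)]
    rw [Real.Gamma_one_half_eq]
    ring
  rw [hg]
  ring
theorem lintegral_gaussianReal_ofReal {h : ℝ → ℝ} (hm : Measurable h)
    (hnn : ∀ y, 0 ≤ h y)
    (hint : Integrable (fun y => gaussianPDFReal 0 1 y * h y)) :
    ∫⁻ y, ENNReal.ofReal (h y) ∂(gaussianReal 0 1)
      = ENNReal.ofReal (∫ y, gaussianPDFReal 0 1 y * h y) := by
  rw [gaussianReal_of_var_ne_zero 0 one_ne_zero,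
    lintegral_withDensity_eq_lintegral_mul _ (measurable_gaussianPDF 0 1) hm.ennreal_ofReal,
    ofReal_integral_eq_lintegral_ofReal hint
      (ae_of_all _ fun y => mul_nonneg (gaussianPDFReal_nonneg _ _ _) (hnn y))]
  refine lintegral_congr fun y => ?_
  rw [Pi.mul_apply, ENNReal.ofReal_mul (gaussianPDFReal_nonneg _ _ _)]
  rfl

theorem key0 {a : ℝ} (y : ℝ) : gaussianPDFReal 0 1 y * rexp (-(a * y ^ 2))
    = (Real.sqrt (2 * π))⁻¹ * rexp (-(a + 1/2) * y ^ 2) := by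
  simp only [gaussianPDFReal, NNReal.coe_one, mul_one, sub_zero]
  rw [mul_assoc, ← Real.exp_add]
  congr 2
  ring

theorem gauss0 {a : ℝ} (ha : 0 < a) :
    ∫⁻ y, ENNReal.ofReal (rexp (-(a * y ^ 2))) ∂(gaussianReal 0 1)
      = ENNReal.ofReal (1 / Real.sqrt (1 + 2 * a)) := by
  have hb : 0 < a + 1/2 := by linarith
  have hfun : (fun y => gaussianPDFReal 0 1 y * rexp (-(a * y ^ 2)))
      = fun y => (Real.sqrt (2 * π))⁻¹ * rexp (-(a + 1/2) * y ^ 2) := funext key0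
  rw [lintegral_gaussianReal_ofReal (by fun_prop) (fun y => (Real.exp_pos _).le)
    (by rw [hfun]; exact (integrable_exp_neg_mul_sq hb).const_mul _)]
  congr 1
  rw [hfun, integral_const_mul, integral_gaussian]
  rw [show (1:ℝ) + 2 * a = 2 * (a + 1/2) by ring]
  rw [Real.sqrt_mul (by norm_num : (0:ℝ) ≤ 2) π, Real.sqrt_mul (by norm_num : (0:ℝ) ≤ 2) (a + 1/2),
    Real.sqrt_div pi_pos.le]
  have hπ : 0 < Real.sqrt π := Real.sqrt_pos.2 pi_pos
  have h2 : 0 < Real.sqrt 2 := by positivity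
  have hb' : 0 < Real.sqrt (a + 1/2) := Real.sqrt_pos.2 hb
  field_simp

theorem key4 {a : ℝ} (y : ℝ) : gaussianPDFReal 0 1 y * (y ^ 4 * rexp (-(a * y ^ 2)))
    = (Real.sqrt (2 * π))⁻¹ * (y ^ 4 * rexp (-(a + 1/2) * y ^ 2)) := by
  simp only [gaussianPDFReal, NNReal.coe_one, mul_one, sub_zero]
  rw [show (Real.sqrt (2*π))⁻¹ * rexp (-y^2/2) * (y^4 * rexp (-(a * y^2)))
    = (Real.sqrt (2*π))⁻¹ * (y^4 * (rexp (-y^2/2) * rexp (-(a * y^2)))) by ring,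
    ← Real.exp_add]
  congr 3
  ring

theorem rpow_five_halves {t : ℝ} (ht : 0 < t) :
    t ^ ((5:ℝ)/2) = t ^ (2:ℕ) * Real.sqrt t := by
  rw [show ((5:ℝ)/2) = ((2:ℕ):ℝ) + 1/2 by norm_num, Real.rpow_add ht, Real.rpow_natCast,
    ← Real.sqrt_eq_rpow]

theorem gauss4 {a : ℝ} (ha : 0 < a) :
    ∫⁻ y, ENNReal.ofReal (y ^ 4 * rexp (-(a * y ^ 2))) ∂(gaussianReal 0 1)
      = ENNReal.ofReal (3 / ((1 + 2 * a) ^ 2 * Real.sqrt (1 + 2 * a))) := by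
  have hb : 0 < a + 1/2 := by linarith
  have hu : (0:ℝ) < 1 + 2 * a := by linarith
  have hfun : (fun y => gaussianPDFReal 0 1 y * (y ^ 4 * rexp (-(a * y ^ 2))))
      = fun y => (Real.sqrt (2 * π))⁻¹ * (y ^ 4 * rexp (-(a + 1/2) * y ^ 2)) := funext key4
  have hint4 : Integrable (fun y : ℝ => y ^ 4 * rexp (-(a + 1/2) * y ^ 2)) := by
    have h := integrable_rpow_mul_exp_neg_mul_sq hb (s := 4) (by norm_num)
    have he : (fun x : ℝ => x ^ (4:ℝ) * rexp (-(a + 1/2) * x ^ 2))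
        = fun x : ℝ => x ^ (4:ℕ) * rexp (-(a + 1/2) * x ^ 2) := by
      ext x
      rw [show (4:ℝ) = ((4:ℕ):ℝ) by norm_num, Real.rpow_natCast]
    rwa [he] at h
  rw [lintegral_gaussianReal_ofReal (by fun_prop)
    (fun y => mul_nonneg (by positivity) (Real.exp_pos _).le)
    (by rw [hfun]; exact hint4.const_mul _)]
  congr 1
  rw [hfun, integral_const_mul, integral_pow4_gaussian hb]
  -- algebra
  have h1b : (1:ℝ) / (a + 1/2) = 2 / (1 + 2 * a) := by
    field_simp
    ring
  rw [h1b, Real.div_rpow (by norm_num) hu.le, rpow_five_halves two_pos, rpow_five_halves hu,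
    Real.sqrt_mul (by norm_num : (0:ℝ) ≤ 2) π]
  have hπ : 0 < Real.sqrt π := Real.sqrt_pos.2 pi_pos
  have h2 : 0 < Real.sqrt 2 := by positivity
  have hu' : 0 < Real.sqrt (1 + 2 * a) := Real.sqrt_pos.2 hu
  have h2sq : Real.sqrt 2 * Real.sqrt 2 = 2 := Real.mul_self_sqrt (by norm_num)
  field_simp
  ring_nf

/-- The law of a vector of `p` i.i.d. standard normal random variables. -/
noncomputable def stdGaussianPi (p : ℕ) : Measure (Fin p → ℝ) :=
  Measure.pi fun _ => gaussianReal 0 1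

/-- The `i`-th eigenvalue of the spatial sign covariance matrix corresponding to
shape eigenvalues `lam`. -/
noncomputable def sscmEigen (p : ℕ) (lam : Fin p → ℝ) (i : Fin p) : ℝ :=
  ∫ ω, lam i * (ω i) ^ 2 / (∑ j, lam j * (ω j) ^ 2) ∂(stdGaussianPi p)

theorem eta_diag_integral_repr (p : ℕ) (hp : 1 ≤ p) (lam : Fin p → ℝ)
    (hpos : ∀ i, 0 < lam i) (i : Fin p) :
    (∫ ω, (lam i) ^ 2 * (ω i) ^ 4 / (∑ k, lam k * (ω k) ^ 2) ^ 2
        ∂(stdGaussianPi p)) =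
      3 * (lam i) ^ 2 / 4 *
        ∫ x in Set.Ioi (0 : ℝ),
          x / ((1 + lam i * x) ^ 2 * ∏ k, Real.sqrt (1 + lam k * x)) := by
  classical
  haveI : NullSingletonClass (gaussianReal 0 1) :=
    ⟨fun x => gaussianReal_absolutelyContinuous 0 one_ne_zero (measure_singleton x)⟩
  simp only [stdGaussianPi]
  set μp : Measure (Fin p → ℝ) := Measure.pi fun _ => gaussianReal 0 1 with hμp
  haveI : IsProbabilityMeasure μp := by rw [hμp]; infer_instance
  -- measurability of the sum
  have hS_meas : Measurable fun ω : Fin p → ℝ => ∑ k, lam k * ω k ^ 2 :=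
    Finset.measurable_sum _ fun k _ => by fun_prop
  have hmeas1 : Measurable fun ω : Fin p → ℝ =>
      lam i ^ 2 * ω i ^ 4 / (∑ k, lam k * ω k ^ 2) ^ 2 :=
    (((measurable_pi_apply i).pow_const 4).const_mul _).div (hS_meas.pow_const 2)
  have hnn : 0 ≤ᵐ[μp] fun ω : Fin p → ℝ =>
      lam i ^ 2 * ω i ^ 4 / (∑ k, lam k * ω k ^ 2) ^ 2 :=
    Filter.Eventually.of_forall fun ω => div_nonneg (by positivity) (sq_nonneg _)
  rw [integral_eq_lintegral_of_nonneg_ae hnn hmeas1.aestronglyMeasurable]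
  -- step 2 : pointwise a.e. identity
  have step2 : ∀ᵐ ω ∂μp,
      ENNReal.ofReal (lam i ^ 2 * ω i ^ 4 / (∑ k, lam k * ω k ^ 2) ^ 2)
        = ∫⁻ x in Set.Ioi 0, ENNReal.ofReal (lam i ^ 2 * ω i ^ 4 / 4 *
            (x * rexp (-((∑ k, lam k * ω k ^ 2) / 2 * x)))) := by
    rw [hμp]
    filter_upwards [Measure.ae_eval_ne (fun _ : Fin p => gaussianReal 0 1) i 0] with ω hω
    have hωi : 0 < lam i * ω i ^ 2 := by
      have h1 := hpos i
      have h2 : 0 < ω i ^ 2 := by positivity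
      positivity
    have hS : 0 < ∑ k, lam k * ω k ^ 2 :=
      lt_of_lt_of_le hωi (Finset.single_le_sum
        (fun k _ => mul_nonneg (hpos k).le (sq_nonneg _)) (Finset.mem_univ i))
    have hr : 0 < (∑ k, lam k * ω k ^ 2) / 2 := by linarith
    have hdiv : lam i ^ 2 * ω i ^ 4 / (∑ k, lam k * ω k ^ 2) ^ 2
        = lam i ^ 2 * ω i ^ 4 / 4 * (1 / ((∑ k, lam k * ω k ^ 2) / 2) ^ 2) := by
      field_simp
      ring
    rw [hdiv, ENNReal.ofReal_mul (by positivity), ← lintegral_kernel hr,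
      ← lintegral_const_mul' _ _ ENNReal.ofReal_ne_top]
    refine lintegral_congr fun x => ?_
    rw [← ENNReal.ofReal_mul (by positivity)]
  rw [lintegral_congr_ae step2]
  -- step 3 : Tonelli swap
  have hFm : AEMeasurable (Function.uncurry fun (ω : Fin p → ℝ) (x : ℝ) =>
      ENNReal.ofReal (lam i ^ 2 * ω i ^ 4 / 4 *
        (x * rexp (-((∑ k, lam k * ω k ^ 2) / 2 * x)))))
      (μp.prod (volume.restrict (Set.Ioi 0))) := by
    refine Measurable.aemeasurable (Measurable.ennreal_ofReal ?_)
    refine Measurable.mul ?_ ?_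
    · exact ((((measurable_pi_apply i).comp measurable_fst).pow_const 4).const_mul _).div_const 4
    · exact measurable_snd.mul
        ((((hS_meas.comp measurable_fst).div_const 2).mul measurable_snd).neg.exp)
  rw [lintegral_lintegral_swap hFm]
  -- step 4 : inner Gaussian integral at fixed x
  have step4 : ∀ᵐ x ∂volume, x ∈ Set.Ioi (0:ℝ) →
      (∫⁻ ω, ENNReal.ofReal (lam i ^ 2 * ω i ^ 4 / 4 *
          (x * rexp (-((∑ k, lam k * ω k ^ 2) / 2 * x)))) ∂μp)
        = ENNReal.ofReal (3 * lam i ^ 2 / 4 *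
            (x / ((1 + lam i * x) ^ 2 * ∏ k, Real.sqrt (1 + lam k * x)))) := by
    refine Filter.Eventually.of_forall fun x hx => ?_
    have hx0 : (0:ℝ) < x := hx
    set G : Fin p → ℝ → ℝ :=
      fun k y => (if k = i then y ^ 4 else 1) * rexp (-(lam k * (x / 2) * y ^ 2)) with hGdef
    have hGnn : ∀ k y, 0 ≤ G k y := by
      intro k y
      refine mul_nonneg ?_ (Real.exp_pos _).le
      by_cases hk : k = i <;> simp [hk] <;> positivity
    have hpoint : ∀ ω : Fin p → ℝ,
        lam i ^ 2 * ω i ^ 4 / 4 * (x * rexp (-((∑ k, lam k * ω k ^ 2) / 2 * x)))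
          = lam i ^ 2 / 4 * x * ∏ k, G k (ω k) := by
      intro ω
      have hexp : rexp (-((∑ k, lam k * ω k ^ 2) / 2 * x))
          = ∏ k, rexp (-(lam k * (x / 2) * ω k ^ 2)) := by
        rw [← Real.exp_sum]
        congr 1
        rw [Finset.sum_neg_distrib]
        congr 1
        rw [Finset.sum_div, Finset.sum_mul]
        exact Finset.sum_congr rfl fun k _ => by ring
      have hprod : ∏ k, G k (ω k)
          = ω i ^ 4 * ∏ k, rexp (-(lam k * (x / 2) * ω k ^ 2)) := by
        rw [hGdef]
        simp only
        rw [Finset.prod_mul_distrib]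
        congr 1
        rw [Finset.prod_ite_eq' Finset.univ i fun k => ω k ^ 4]
        simp
      rw [hexp, hprod]
      ring
    have hGmeas : ∀ k, Measurable fun y => ENNReal.ofReal (G k y) := by
      intro k
      refine Measurable.ennreal_ofReal ?_
      rcases eq_or_ne k i with hk | hk
      · subst hk
        simp only [hGdef, eq_self_iff_true, if_true]
        exact (measurable_id.pow_const 4).mul
          (((measurable_id.pow_const 2).const_mul _).neg.exp)
      · simp only [hGdef, hk, if_false, one_mul]
        exact ((measurable_id.pow_const 2).const_mul _).neg.exp
    have hfac : ∀ k, (∫⁻ y, ENNReal.ofReal (G k y) ∂(gaussianReal 0 1))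
        = (if k = i then ENNReal.ofReal (3 / (1 + lam i * x) ^ 2) else 1)
            * ENNReal.ofReal (1 / Real.sqrt (1 + lam k * x)) := by
      intro k
      have hak : 0 < lam k * (x / 2) := by
        have := hpos k
        positivity
      have h2ak : 1 + 2 * (lam k * (x / 2)) = 1 + lam k * x := by ring
      by_cases hk : k = i
      · subst hk
        have hg := gauss4 hak
        rw [h2ak] at hg
        have hL : (∫⁻ y, ENNReal.ofReal (G k y) ∂(gaussianReal 0 1))
            = ENNReal.ofReal (3 / ((1 + lam k * x) ^ 2 * Real.sqrt (1 + lam k * x))) := by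
          rw [← hg]
          refine lintegral_congr fun y => ?_
          congr 1
          simp [hGdef]
        rw [hL, if_pos rfl, ← ENNReal.ofReal_mul (by positivity)]
        congr 1
        rw [div_mul_div_comm, mul_one]
      · have hg := gauss0 hak
        rw [h2ak] at hg
        have hL : (∫⁻ y, ENNReal.ofReal (G k y) ∂(gaussianReal 0 1))
            = ENNReal.ofReal (1 / Real.sqrt (1 + lam k * x)) := by
          rw [← hg]
          refine lintegral_congr fun y => ?_
          congr 1
          simp [hGdef, hk]
        rw [hL, if_neg hk, one_mul]
    -- put it together
    calc ∫⁻ ω, ENNReal.ofReal (lam i ^ 2 * ω i ^ 4 / 4 *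
            (x * rexp (-((∑ k, lam k * ω k ^ 2) / 2 * x)))) ∂μp
        = ∫⁻ ω, ENNReal.ofReal (lam i ^ 2 / 4 * x)
            * ∏ k, ENNReal.ofReal (G k (ω k)) ∂μp := by
          refine lintegral_congr fun ω => ?_
          rw [hpoint ω, ENNReal.ofReal_mul (by positivity),
            ENNReal.ofReal_prod_of_nonneg fun k _ => hGnn k (ω k)]
      _ = ENNReal.ofReal (lam i ^ 2 / 4 * x)
            * ∏ k, ∫⁻ y, ENNReal.ofReal (G k y) ∂(gaussianReal 0 1) := by
          rw [lintegral_const_mul' _ _ ENNReal.ofReal_ne_top, hμp,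
            lintegral_fin_pi_prod _ _ hGmeas]
      _ = ENNReal.ofReal (lam i ^ 2 / 4 * x) * (ENNReal.ofReal (3 / (1 + lam i * x) ^ 2)
            * ∏ k, ENNReal.ofReal (1 / Real.sqrt (1 + lam k * x))) := by
          congr 1
          simp_rw [hfac]
          rw [Finset.prod_mul_distrib, Finset.prod_ite_eq' Finset.univ i
            fun _ => ENNReal.ofReal (3 / (1 + lam i * x) ^ 2)]
          simp
      _ = ENNReal.ofReal (3 * lam i ^ 2 / 4 *
            (x / ((1 + lam i * x) ^ 2 * ∏ k, Real.sqrt (1 + lam k * x)))) := by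
          rw [← ENNReal.ofReal_prod_of_nonneg fun k _ => by positivity,
            ← ENNReal.ofReal_mul (by positivity), ← ENNReal.ofReal_mul (by positivity)]
          congr 1
          have hden : (0:ℝ) < 1 + lam i * x := by
            have := hpos i
            positivity
          have hP : (0:ℝ) < ∏ k, Real.sqrt (1 + lam k * x) :=
            Finset.prod_pos fun k _ => Real.sqrt_pos.2 (by have := hpos k; positivity)
          rw [show (∏ k, 1 / Real.sqrt (1 + lam k * x))
              = (∏ k, Real.sqrt (1 + lam k * x))⁻¹ by
            rw [← Finset.prod_inv_distrib]
            exact Finset.prod_congr rfl fun k _ => one_div _]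
          field_simp
  rw [setLIntegral_congr_fun_ae measurableSet_Ioi step4]
  -- step 5 : pull out the constant and identify with the Bochner integral
  have hc : (0:ℝ) ≤ 3 * lam i ^ 2 / 4 := by positivity
  simp_rw [ENNReal.ofReal_mul hc]
  rw [lintegral_const_mul' _ _ ENNReal.ofReal_ne_top, ENNReal.toReal_mul,
    ENNReal.toReal_ofReal hc]
  congr 1
  have hjnn : 0 ≤ᵐ[volume.restrict (Set.Ioi (0:ℝ))] fun x =>
      x / ((1 + lam i * x) ^ 2 * ∏ k, Real.sqrt (1 + lam k * x)) :=
    (ae_restrict_iff' measurableSet_Ioi).2 (Filter.Eventually.of_forall fun x hx =>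
      div_nonneg (le_of_lt hx) (mul_nonneg (sq_nonneg _)
        (Finset.prod_nonneg fun k _ => Real.sqrt_nonneg _)))
  have hjm : AEStronglyMeasurable (fun x : ℝ =>
      x / ((1 + lam i * x) ^ 2 * ∏ k, Real.sqrt (1 + lam k * x)))
      (volume.restrict (Set.Ioi (0:ℝ))) := by
    refine Measurable.aestronglyMeasurable ?_
    exact measurable_id.div
      ((((measurable_id.const_mul _).const_add 1).pow_const 2).mul
        (Finset.measurable_prod _ fun k _ =>
          ((measurable_id.const_mul _).const_add 1).sqrt))
  rw [integral_eq_lintegral_of_nonneg_ae hjnn hjm]
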